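/- Let A be a complex Banach algebra, Z : A → ℂ a continuous linear functional, Ω₀, Ω̂ ∈ A with Ω₀·Ω̂ = Ω̂·Ω₀, v ∈ A, families b, c, C : Fin l → A, and scalars ω : Fin l × Fin l → ℂ. Assume: (i) Ω̂·b_j − b_j·Ω̂ = −C_j and Ω̂·C_j = C_j·Ω̂ for each j; (ii) Z(exp(Ω₀)·b_j·a) = 0 for every a ∈ A and every j; (iii) b_i·b_j = −b_j·b_i, b_i·c_k = −c_k·b_i, and C_j·b_i = −b_i·C_j for all i, j, k; (iv) C_j·c_k + c_k·C_j = ω_{j,k}·1 for all j, k; (v) C_j·v = 0 for all j. Then for every fixed j, Z(exp(Ω₀−Ω̂)·(b_1⋯b_l)·(c_l⋯c_1)·v) = Σ_{k=1}^l (−1)^{j+k} ω_{j,k} · Z(exp(Ω₀−Ω̂)·(b_1⋯b̂_j⋯b_l)·(c_l⋯ĉ_k⋯c_1)·v), where b̂_j and ĉ_k indicate omitted factors. (This is the abstract content of Lemma A.4 of the paper: the Laplace-expansion recursion tr^α{e^{Ω} 𝓑^{(l)} 𝓒^{(l)} q^{2αS(0)}} = Σ_k (−1)^{j+k} ω(ζ_j^+,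 ζ_k^−; α) tr^α{e^{Ω} 𝓑_j^{(l)} 𝓒_k^{(l)} q^{2αS(0)}}.) -/

import Mathlib

open NormedSpace

section Aux

variable {A : Type*} [Ring A] [Algebra ℂ A]

private lemma LR_exp_deriv_comm {A : Type*} [NormedRing A] [NormedAlgebra ℂ A] [CompleteSpace A]
    (X y c : A) (h1 : X * y = y * X + c) (h2 : X * c = c * X) :
    exp X * y = y * exp X + c * exp X := by
  have hpow : ∀ n : ℕ, X ^ (n + 1) * y = y * X ^ (n + 1) + ((n : ℂ) + 1) • (c * X ^ n) := by
    intro n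
    induction n with
    | zero => simpa using h1
    | succ n ih =>
      have e1 : X ^ (n + 2) * y = X * (X ^ (n + 1) * y) := by
        rw [pow_succ', mul_assoc]
      rw [e1, ih, mul_add, mul_smul_comm]
      have e2 : X * (c * X ^ n) = c * X ^ (n + 1) := by
        rw [← mul_assoc, h2, mul_assoc, ← pow_succ']
      have e3 : X * (y * X ^ (n + 1)) = y * X ^ (n + 2) + c * X ^ (n + 1) := by
        rw [← mul_assoc, h1, add_mul, mul_assoc, ← pow_succ']
      rw [e2, e3]
      have : ((n : ℂ) + 1 + 1) • (c * X ^ (n + 1))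
          = c * X ^ (n + 1) + ((n : ℂ) + 1) • (c * X ^ (n + 1)) := by
        rw [add_smul, one_smul, add_comm]
      push_cast
      rw [this, add_assoc]
  have hs : Summable fun n : ℕ => ((n.factorial : ℂ))⁻¹ • X ^ n :=
    expSeries_summable' (𝕂 := ℂ) X
  set h : ℕ → A := fun n => match n with
    | 0 => 0
    | (m + 1) => ((m.factorial : ℂ))⁻¹ • (c * X ^ m) with hh
  have hsucc : ∀ n : ℕ, h (n + 1) = c * (((n.factorial : ℂ))⁻¹ • X ^ n) := by
    intro n; simp [hh, mul_smul_comm]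
  have hsumh : Summable h := by
    rw [← summable_nat_add_iff 1]
    simpa [hsucc] using hs.mul_left c
  have hsumG : Summable fun n : ℕ => ((n.factorial : ℂ))⁻¹ • (y * X ^ n) := by
    simpa [mul_smul_comm] using hs.mul_left y
  have key : ∀ n : ℕ, ((n.factorial : ℂ))⁻¹ • (X ^ n * y)
      = ((n.factorial : ℂ))⁻¹ • (y * X ^ n) + h n := by
    intro n
    match n with
    | 0 => simp [hh]
    | (m + 1) =>
      rw [hpow m]
      have hfac : ((m + 1).factorial : ℂ)⁻¹ * ((m : ℂ) + 1) = ((m.factorial : ℂ))⁻¹ := by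
        have h1 : ((m : ℂ) + 1) ≠ 0 := Nat.cast_add_one_ne_zero m
        have h2 : ((m.factorial : ℂ)) ≠ 0 := Nat.cast_ne_zero.mpr m.factorial_ne_zero
        rw [Nat.factorial_succ]
        push_cast
        field_simp
      rw [smul_add, smul_smul, hfac]
  rw [exp_eq_tsum ℂ]
  rw [← hs.tsum_mul_right y]
  simp_rw [smul_mul_assoc, key]
  rw [Summable.tsum_add hsumG hsumh]
  congr 1
  · simp_rw [← mul_smul_comm]
    exact hs.tsum_mul_left y
  · rw [Summable.tsum_eq_zero_add hsumh]
    simp only [hsucc]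
    rw [hs.tsum_mul_left c]
    simp [hh]

private lemma LR_eraseIdx_reverse {α : Type*} : ∀ (xs : List α) (k : ℕ), k < xs.length →
    (xs.eraseIdx k).reverse = xs.reverse.eraseIdx (xs.length - 1 - k)
  | [], k, h => by simp at h
  | a :: xs, 0, h => by
    simp only [List.eraseIdx_cons_zero, List.reverse_cons, List.length_cons,
      Nat.add_sub_cancel, Nat.sub_zero]
    rw [List.eraseIdx_append_of_length_le (by simp)]
    simp
  | a :: xs, k + 1, h => by
    have hk : k < xs.length := by simpa using Nat.lt_of_succ_lt_succ h
    simp only [List.eraseIdx_cons_succ, List.reverse_cons, List.length_cons]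
    rw [LR_eraseIdx_reverse xs k hk]
    have h1 : xs.length - 1 - k < xs.reverse.length := by
      simp only [List.length_reverse]; omega
    have h2 : xs.length + 1 - 1 - (k + 1) = xs.length - 1 - k := by omega
    rw [h2, List.eraseIdx_append_of_lt_length h1]

private lemma LR_prod_mul_anticomm (x : A) : ∀ (L : List A), (∀ y ∈ L, y * x = -(x * y)) →
    L.prod * x = (-1 : ℂ) ^ L.length • (x * L.prod)
  | [], _ => by simp
  | a :: L, h => by
    have ih := LR_prod_mul_anticomm x L (fun y hy => h y (List.mem_cons_of_mem a hy))
    have ha := h a (List.mem_cons_self)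
    rw [List.prod_cons, mul_assoc, ih, mul_smul_comm, ← mul_assoc, ha,
      neg_mul, smul_neg, mul_assoc, List.length_cons, pow_succ, mul_neg_one, neg_smul]

private lemma LR_mul_eraseIdx_prod : ∀ (L : List A) (n : ℕ) (hn : n < L.length),
    (∀ y ∈ L.take n, L.get ⟨n, hn⟩ * y = -(y * L.get ⟨n, hn⟩)) →
    L.get ⟨n, hn⟩ * (L.eraseIdx n).prod = (-1 : ℂ) ^ n • L.prod
  | [], n, hn => by simp at hn
  | a :: L, 0, hn => by simp
  | a :: L, n + 1, hn => fun h => by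
    have hn' : n < L.length := by simpa using Nat.lt_of_succ_lt_succ hn
    have hget : (a :: L).get ⟨n + 1, hn⟩ = L.get ⟨n, hn'⟩ := rfl
    have ih := LR_mul_eraseIdx_prod L n hn' (fun y hy => by
      have := h y (by simpa using List.mem_cons_of_mem a hy)
      rwa [hget] at this)
    have ha := h a (by simp)
    rw [hget] at ha ⊢
    rw [List.eraseIdx_cons_succ, List.prod_cons, List.prod_cons, ← mul_assoc, ha,
      neg_mul, mul_assoc, ih, mul_smul_comm, pow_succ, mul_neg_one, neg_smul]

private lemma LR_contact_move (x : A) : ∀ (L : List A) (f : ℕ → ℂ),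
    (∀ (i : ℕ) (hi : i < L.length), L.get ⟨i, hi⟩ * x + x * L.get ⟨i, hi⟩ = f i • (1 : A)) →
    L.prod * x
      = (∑ i ∈ Finset.range L.length, ((-1 : ℂ) ^ (L.length - 1 - i) * f i) • (L.eraseIdx i).prod)
        + (-1 : ℂ) ^ L.length • (x * L.prod)
  | [], f, _ => by simp
  | a :: L, f, h => by
    have ih := LR_contact_move x L (fun i => f (i + 1))
      (fun i hi => h (i + 1) (by simpa using Nat.succ_lt_succ hi))
    have ha : a * x + x * a = f 0 • (1 : A) := h 0 (by simp)
    have hax : a * x = f 0 • (1 : A) - x * a := by rw [← ha]; abel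
    have hlast : (-1 : ℂ) ^ L.length • (a * (x * L.prod))
        = ((-1 : ℂ) ^ L.length * f 0) • L.prod
          + (-1 : ℂ) ^ (L.length + 1) • (x * (a * L.prod)) := by
      rw [← mul_assoc, hax, sub_mul, smul_mul_assoc, one_mul, smul_sub,
        sub_eq_add_neg, mul_smul, mul_assoc]
      congr 1
      rw [pow_succ, mul_neg_one, neg_smul]
    have hsum : (∑ i ∈ Finset.range (a :: L).length,
          ((-1 : ℂ) ^ ((a :: L).length - 1 - i) * f i) • ((a :: L).eraseIdx i).prod)
        = ((-1 : ℂ) ^ L.length * f 0) • L.prod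
          + ∑ i ∈ Finset.range L.length,
              ((-1 : ℂ) ^ (L.length - 1 - i) * f (i + 1)) • (a * (L.eraseIdx i).prod) := by
      simp only [List.length_cons]
      rw [Finset.sum_range_succ', add_comm]
      refine congrArg₂ (· + ·) ?_ (Finset.sum_congr rfl fun i _ => ?_)
      · simp
      · simp only [List.eraseIdx_cons_succ, List.prod_cons, Nat.add_sub_cancel]
        rw [show L.length - (i + 1) = L.length - 1 - i from by omega]
    rw [List.prod_cons, mul_assoc, ih, mul_add, Finset.mul_sum]
    simp_rw [mul_smul_comm]
    rw [hlast, hsum]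
    simp only [List.length_cons]
    abel

private lemma LR_contact_ofFn {l : ℕ} (x : A) (c : Fin l → A) (w : Fin l → ℂ)
    (h : ∀ k, c k * x + x * c k = w k • (1 : A)) :
    (List.ofFn c).reverse.prod * x
      = (∑ k : Fin l, ((-1 : ℂ) ^ (k : ℕ) * w k) •
          ((List.ofFn c).eraseIdx (k : ℕ)).reverse.prod)
        + (-1 : ℂ) ^ l • (x * (List.ofFn c).reverse.prod) := by
  set L : List A := (List.ofFn c).reverse with hL
  have hlen : L.length = l := by simp [hL]
  set f : ℕ → ℂ := fun i => if hi : i < l then w (Fin.rev ⟨i, hi⟩) else 0 with hf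
  have hget : ∀ (i : ℕ) (hi : i < l), L.get ⟨i, by omega⟩ = c ⟨l - 1 - i, by omega⟩ := by
    intro i hi
    rw [List.get_eq_getElem]
    simp only [hL]
    rw [List.getElem_reverse, List.getElem_ofFn]
    congr 1
    ext
    simp
  have hmem : ∀ (i : ℕ) (hi : i < L.length),
      L.get ⟨i, hi⟩ * x + x * L.get ⟨i, hi⟩ = f i • (1 : A) := by
    intro i hi
    have hil : i < l := by omega
    rw [hget i hil, hf]
    simp only [hil, dif_pos]
    have : Fin.rev (⟨i, hil⟩ : Fin l) = ⟨l - 1 - i, by omega⟩ := by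
      ext; simp [Fin.rev]; omega
    rw [this]
    exact h _
  have hmain := LR_contact_move x L f hmem
  rw [hlen] at hmain
  rw [hmain]
  congr 1
  have herase : ∀ (i : ℕ), i < l →
      L.eraseIdx i = ((List.ofFn c).eraseIdx (l - 1 - i)).reverse := by
    intro i hi
    rw [hL, LR_eraseIdx_reverse (List.ofFn c) (l - 1 - i) (by simp only [List.length_ofFn]; omega)]
    congr 1
    simp only [List.length_ofFn]
    omega
  set G : ℕ → A := fun m => ((-1 : ℂ) ^ m * f (l - 1 - m)) •
      (((List.ofFn c).eraseIdx m).reverse.prod) with hG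
  have hterm : ∀ i ∈ Finset.range l,
      ((-1 : ℂ) ^ (l - 1 - i) * f i) • (L.eraseIdx i).prod = G (l - 1 - i) := by
    intro i hi
    rw [Finset.mem_range] at hi
    rw [hG]
    simp only
    rw [herase i hi, show l - 1 - (l - 1 - i) = i from by omega]
  rw [Finset.sum_congr rfl hterm, Finset.sum_range_reflect G l]
  rw [← Fin.sum_univ_eq_sum_range]
  refine Finset.sum_congr rfl fun k _ => ?_
  have hk : (k : ℕ) < l := k.isLt
  rw [hG]
  simp only [hf]
  have h1 : l - 1 - (k : ℕ) < l := by omega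
  rw [dif_pos h1]
  have : Fin.rev (⟨l - 1 - (k : ℕ), h1⟩ : Fin l) = k := by
    ext; simp [Fin.rev]; omega
  rw [this]

end Aux

/-- Lemma A.4 (abstract form): the Laplace-expansion recursion
`Z(e^{Ω₀−Ω̂}·(b_1⋯b_l)·(c_l⋯c_1)·v)
  = Σ_k (−1)^{j+k} ω_{j,k} Z(e^{Ω₀−Ω̂}·(b_1⋯b̂_j⋯b_l)·(c_l⋯ĉ_k⋯c_1)·v)`. -/
theorem laplace_recursion {A : Type*} [NormedRing A] [NormedAlgebra ℂ A]
    [CompleteSpace A] (Z : A →L[ℂ] ℂ) {l : ℕ} (Ω₀ Ωhat v : A)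
    (b c C : Fin l → A) (ω : Fin l × Fin l → ℂ)
    (hΩ : Ω₀ * Ωhat = Ωhat * Ω₀)
    (hi₁ : ∀ j, Ωhat * b j - b j * Ωhat = -(C j))
    (hi₂ : ∀ j, Ωhat * C j = C j * Ωhat)
    (hii : ∀ j, ∀ a : A, Z (exp Ω₀ * b j * a) = 0)
    (hbb : ∀ i j, b i * b j = -(b j * b i))
    (hbc : ∀ i k, b i * c k = -(c k * b i))
    (hCb : ∀ i j, C j * b i = -(b i * C j))
    (hCc : ∀ j k, C j * c k + c k * C j = ω (j, k) • (1 : A))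
    (hCv : ∀ j, C j * v = 0)
    (j : Fin l) :
    Z (exp (Ω₀ - Ωhat) * (List.ofFn b).prod * (List.ofFn c).reverse.prod * v)
      = ∑ k : Fin l, (-1 : ℂ) ^ ((j : ℕ) + (k : ℕ)) * ω (j, k) *
          Z (exp (Ω₀ - Ωhat) * ((List.ofFn b).eraseIdx (j : ℕ)).prod *
              ((List.ofFn c).eraseIdx (k : ℕ)).reverse.prod * v) := by
  classical
  have hl0 : 0 < l := j.pos
  set E := exp (Ω₀ - Ωhat) with hE
  set Bj := ((List.ofFn b).eraseIdx (j : ℕ)) with hBj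
  set Mc := (List.ofFn c).reverse with hMc
  -- exponential facts
  have hEsplit : E = exp Ω₀ * exp (-Ωhat) := by
    rw [hE, sub_eq_add_neg, exp_add_of_commute_of_mem_ball (𝕂 := ℂ) ((show Commute Ω₀ Ωhat from hΩ).neg_right)
      ((expSeries_radius_eq_top ℂ A).symm ▸ edist_lt_top _ _) ((expSeries_radius_eq_top ℂ A).symm ▸ edist_lt_top _ _)]
  have hXb : exp (-Ωhat) * b j = b j * exp (-Ωhat) + C j * exp (-Ωhat) := by
    refine LR_exp_deriv_comm _ _ _ ?_ ?_
    · have h := sub_eq_iff_eq_add.mp (hi₁ j)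
      rw [neg_mul, mul_neg, h]
      abel
    · rw [neg_mul, mul_neg, hi₂ j]
  have hXC : exp (-Ωhat) * C j = C j * exp (-Ωhat) :=
    (((show Commute Ωhat (C j) from hi₂ j).neg_left).exp_left).eq
  have hZC : ∀ a : A, Z (E * (C j * a)) = Z (E * (b j * a)) := by
    intro a
    have hce : C j * exp (-Ωhat) = exp (-Ωhat) * b j - b j * exp (-Ωhat) := by
      rw [hXb]; abel
    have e : exp (-Ωhat) * (C j * a)
        = exp (-Ωhat) * (b j * a) - b j * (exp (-Ωhat) * a) := by
      rw [← mul_assoc, hXC, hce, sub_mul, mul_assoc, mul_assoc]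
    have hkey : E * (C j * a) = E * (b j * a) - exp Ω₀ * b j * (exp (-Ωhat) * a) := by
      rw [hEsplit]
      calc exp Ω₀ * exp (-Ωhat) * (C j * a)
          = exp Ω₀ * (exp (-Ωhat) * (C j * a)) := mul_assoc _ _ _
        _ = exp Ω₀ * (exp (-Ωhat) * (b j * a)) - exp Ω₀ * (b j * (exp (-Ωhat) * a)) := by
            rw [e, mul_sub]
        _ = exp Ω₀ * exp (-Ωhat) * (b j * a) - exp Ω₀ * b j * (exp (-Ωhat) * a) := by
            simp only [mul_assoc]
    rw [hkey, map_sub, hii j (exp (-Ωhat) * a), sub_zero]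
  -- combinatorial facts
  have hBjlen : Bj.length = l - 1 := by
    rw [hBj, List.length_eraseIdx]
    simp [j.isLt]
  have hanti : Bj.prod * C j = (-1 : ℂ) ^ (l - 1) • (C j * Bj.prod) := by
    have hmem : ∀ y ∈ Bj, y * C j = -(C j * y) := by
      intro y hy
      have hy2 : y ∈ List.ofFn b := List.eraseIdx_subset hy
      rw [List.mem_ofFn] at hy2
      obtain ⟨i, rfl⟩ := hy2
      rw [hCb i j, neg_neg]
    have := LR_prod_mul_anticomm (C j) Bj hmem
    rwa [hBjlen] at this
  have hjlt : (j : ℕ) < (List.ofFn b).length := by simp [j.isLt]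
  have hbB : b j * Bj.prod = (-1 : ℂ) ^ (j : ℕ) • (List.ofFn b).prod := by
    have hget : (List.ofFn b).get ⟨(j : ℕ), hjlt⟩ = b j := by
      simp [List.get_ofFn]
    have hmem : ∀ y ∈ (List.ofFn b).take (j : ℕ),
        (List.ofFn b).get ⟨(j : ℕ), hjlt⟩ * y
          = -(y * (List.ofFn b).get ⟨(j : ℕ), hjlt⟩) := by
      intro y hy
      have hy2 : y ∈ List.ofFn b := List.mem_of_mem_take hy
      rw [List.mem_ofFn] at hy2
      obtain ⟨i, rfl⟩ := hy2
      rw [hget]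
      exact hbb j i
    have := LR_mul_eraseIdx_prod (List.ofFn b) (j : ℕ) hjlt hmem
    rwa [hget] at this
  have hcontact : Mc.prod * C j
      = (∑ k : Fin l, ((-1 : ℂ) ^ (k : ℕ) * ω (j, k)) •
          ((List.ofFn c).eraseIdx (k : ℕ)).reverse.prod)
        + (-1 : ℂ) ^ l • (C j * Mc.prod) :=
    LR_contact_ofFn (C j) c (fun k => ω (j, k)) (fun k => by rw [add_comm]; exact hCc j k)
  -- assemble
  have hz : Z (E * (Bj.prod * (Mc.prod * (C j * v)))) = 0 := by
    rw [hCv, mul_zero, mul_zero, mul_zero, map_zero]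
  have hexpand : E * (Bj.prod * (Mc.prod * (C j * v)))
      = (∑ k : Fin l, ((-1 : ℂ) ^ (k : ℕ) * ω (j, k)) •
          (E * Bj.prod * ((List.ofFn c).eraseIdx (k : ℕ)).reverse.prod * v))
        + ((-1 : ℂ) ^ l * (-1 : ℂ) ^ (l - 1)) •
            (E * (C j * (Bj.prod * (Mc.prod * v)))) := by
    have h1 : Mc.prod * (C j * v) = (Mc.prod * C j) * v := (mul_assoc _ _ _).symm
    rw [h1, hcontact, add_mul, Finset.sum_mul, mul_add, mul_add, Finset.mul_sum, Finset.mul_sum]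
    congr 1
    · refine Finset.sum_congr rfl fun k _ => ?_
      simp [smul_mul_assoc, mul_smul_comm, mul_assoc]
    · have h2 : Bj.prod * (C j * (Mc.prod * v))
          = (-1 : ℂ) ^ (l - 1) • (C j * (Bj.prod * (Mc.prod * v))) := by
        rw [← mul_assoc, hanti, smul_mul_assoc, mul_assoc]
      simp only [smul_mul_assoc, mul_smul_comm, mul_assoc, smul_smul]
      rw [h2]
      simp only [mul_smul_comm, smul_smul]
  have hfull : Z (E * (C j * (Bj.prod * (Mc.prod * v))))
      = (-1 : ℂ) ^ (j : ℕ) * Z (E * (List.ofFn b).prod * Mc.prod * v) := by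
    rw [hZC]
    have h3 : E * (b j * (Bj.prod * (Mc.prod * v)))
        = (-1 : ℂ) ^ (j : ℕ) • (E * (List.ofFn b).prod * Mc.prod * v) := by
      rw [← mul_assoc (b j), hbB, smul_mul_assoc, mul_smul_comm]
      congr 1
      rw [mul_assoc, mul_assoc]
    rw [h3, map_smul, smul_eq_mul]
  have hmain : (0 : ℂ)
      = (∑ k : Fin l, ((-1 : ℂ) ^ (k : ℕ) * ω (j, k)) *
          Z (E * Bj.prod * ((List.ofFn c).eraseIdx (k : ℕ)).reverse.prod * v))
        + ((-1 : ℂ) ^ l * (-1 : ℂ) ^ (l - 1)) * ((-1 : ℂ) ^ (j : ℕ) *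
            Z (E * (List.ofFn b).prod * Mc.prod * v)) := by
    rw [← hfull, ← hz, hexpand, map_add, map_sum]
    simp_rw [map_smul, smul_eq_mul]
  have hK : (-1 : ℂ) ^ l * (-1 : ℂ) ^ (l - 1) = -1 := by
    rw [← pow_add, show l + (l - 1) = 2 * (l - 1) + 1 from by omega, pow_succ, pow_mul]
    norm_num
  rw [hK] at hmain
  have hjj : (-1 : ℂ) ^ (j : ℕ) * (-1 : ℂ) ^ (j : ℕ) = 1 := by
    rw [← pow_add, ← two_mul, pow_mul]
    norm_num
  have hsolve : Z (E * (List.ofFn b).prod * Mc.prod * v)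
      = (-1 : ℂ) ^ (j : ℕ) * (∑ k : Fin l, ((-1 : ℂ) ^ (k : ℕ) * ω (j, k)) *
          Z (E * Bj.prod * ((List.ofFn c).eraseIdx (k : ℕ)).reverse.prod * v)) := by
    have h4 : (-1 : ℂ) ^ (j : ℕ) * Z (E * (List.ofFn b).prod * Mc.prod * v)
        = ∑ k : Fin l, ((-1 : ℂ) ^ (k : ℕ) * ω (j, k)) *
            Z (E * Bj.prod * ((List.ofFn c).eraseIdx (k : ℕ)).reverse.prod * v) := by
      linear_combination hmain
    calc Z (E * (List.ofFn b).prod * Mc.prod * v)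
        = ((-1 : ℂ) ^ (j : ℕ) * (-1 : ℂ) ^ (j : ℕ)) *
            Z (E * (List.ofFn b).prod * Mc.prod * v) := by rw [hjj, one_mul]
      _ = (-1 : ℂ) ^ (j : ℕ) * ((-1 : ℂ) ^ (j : ℕ) *
            Z (E * (List.ofFn b).prod * Mc.prod * v)) := by rw [mul_assoc]
      _ = _ := by rw [h4]
  rw [hsolve, Finset.mul_sum]
  refine Finset.sum_congr rfl fun k _ => ?_
  rw [pow_add]
  ring
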